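/- Let q be a power of a prime p, let n ≥ 2, let r be an integer with ⌈n/2⌉ ≤ r ≤ n-1 and gcd(n,r) = 1, and let 1 ≤ s ≤ n-1. Let g_s(x) ∈ F_{q^n}[x] be a monic q-polynomial of degree q^s that splits into linear factors over F_{q^n} and such that g_s(g(x)) = T_n(x) for some monic q-polynomial g(x) ∈ F_{q^n}[x]. Then the number of pairs (x,y) ∈ F_{q^n} × F_{q^n} satisfying g_s(y) = x^{q^{n-r}+1} - x^{q^{n}+q^{n-r}} is exactly q^{n+s}. -/

import Mathlib

open Polynomial

/-- A `q`-polynomial (linearized polynomial): every monomial exponent is a power of `q`. -/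
def IsqPoly (q : ℕ) {F : Type*} [Semiring F] (f : Polynomial F) : Prop :=
  ∀ i ∈ f.support, ∃ k : ℕ, i = q ^ k

/-- Part of Theorem 3.1: the number of affine `F_{q^n}`-rational points of the subcover
`X_{n,r}^s : g_s(y) = x^{q^{n-r}+1} - x^{q^n+q^{n-r}}` is exactly `q^{n+s}`. -/
theorem card_affine_points_subcover
    (p q e n r s : ℕ) (hp : p.Prime) (he : 0 < e) (hq : q = p ^ e)
    (hn : 2 ≤ n) (hr1 : n ≤ 2 * r) (hr2 : r ≤ n - 1) (hgcd : Nat.gcd n r = 1)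
    (hs1 : 1 ≤ s) (hs2 : s ≤ n - 1)
    (F : Type*) [Field F] [Fintype F] (hF : Fintype.card F = q ^ n)
    (gs g : Polynomial F)
    (hgs_monic : gs.Monic) (hgs_q : IsqPoly q gs)
    (hgs_deg : gs.natDegree = q ^ s)
    (hgs_split : Splits (gs.map (RingHom.id F)))
    (hg_monic : g.Monic) (hg_q : IsqPoly q g)
    (hcomp : gs.comp g = ∑ i ∈ Finset.range n, X ^ q ^ i) :
    Set.ncard {xy : F × F |
        Polynomial.eval xy.2 gs = xy.1 ^ (q ^ (n - r) + 1) - xy.1 ^ (q ^ n + q ^ (n - r))} =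
      q ^ (n + s) := by
  classical
  -- q ≥ 2
  have hq2 : 2 ≤ q := by
    rw [hq]
    calc 2 ≤ p := hp.two_le
    _ ≤ p ^ e := Nat.le_self_pow he.ne' p
  -- characteristic of F is p
  have hcard : Fintype.card F = p ^ (e * n) := by rw [hF, hq, ← pow_mul]
  have hchar : CharP F p := by
    have hc : CharP F (ringChar F) := ringChar.charP F
    obtain ⟨m, hcprime, hcard'⟩ := FiniteField.card F (ringChar F)
    have hen : 0 < e * n := Nat.mul_pos he (by omega)
    have hdvd : p ∣ ringChar F ^ (m : ℕ) := by
      rw [← hcard', hcard]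
      exact dvd_pow_self p hen.ne'
    have : p ∣ ringChar F := hp.dvd_of_dvd_pow hdvd
    have hpe : p = ringChar F := ((Nat.prime_dvd_prime_iff_eq hp hcprime).mp this)
    rwa [hpe]
  have hqF : (q : F) = 0 := by
    have : ((p : ℕ) : F) = 0 := CharP.cast_eq_zero F p
    rw [hq]
    push_cast
    rw [this, zero_pow he.ne']
  have hqkF : ∀ k : ℕ, 1 ≤ k → ((q ^ k : ℕ) : F) = 0 := by
    intro k hk
    push_cast
    rw [hqF, zero_pow (by omega)]
  -- derivative of a q-polynomial is the constant equal to its linear coefficient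
  have hderiv : ∀ f : Polynomial F, IsqPoly q f → derivative f = C (f.coeff 1) := by
    intro f hf
    ext m
    rw [coeff_derivative, coeff_C]
    rcases eq_or_ne m 0 with hm | hm
    · simp [hm]
    · simp only [if_neg hm]
      by_cases hmem : m + 1 ∈ f.support
      · obtain ⟨k, hk⟩ := hf _ hmem
        have hk1 : 1 ≤ k := by
          rcases Nat.eq_zero_or_pos k with h0 | h0
          · exfalso; rw [h0, pow_zero] at hk; omega
          · exact h0
        have : ((m + 1 : ℕ) : F) = 0 := by
          rw [show (m + 1 : ℕ) = q ^ k from hk]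
          exact hqkF k hk1
        push_cast at this ⊢
        rw [this, mul_zero]
      · rw [Polynomial.notMem_support_iff.mp hmem, zero_mul]
  -- the linear coefficient of gs is nonzero (via the chain rule applied to hcomp)
  have hgs1 : gs.coeff 1 ≠ 0 := by
    have h1 : derivative (gs.comp g) = C (gs.coeff 1) * C (g.coeff 1) := by
      rw [derivative_comp, hderiv gs hgs_q, hderiv g hg_q, C_comp]; ring
    have h2 : derivative (∑ i ∈ Finset.range n, (X : Polynomial F) ^ q ^ i) = C 1 := by
      rw [derivative_sum]
      rw [Finset.sum_eq_single 0]
      · simp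
      · intro i hi hi0
        rw [derivative_X_pow]
        have : ((q ^ i : ℕ) : F) = 0 := hqkF i (by omega)
        rw [this, map_zero, zero_mul]
      · intro h; exact absurd (Finset.mem_range.mpr (by omega)) h
    rw [hcomp, h2, ← C_mul] at h1
    have := C_injective (h1.symm)
    intro hzero
    rw [hzero, zero_mul] at this
    exact one_ne_zero this.symm
  -- gs is separable
  have hsep : gs.Separable := by
    refine ⟨0, C (gs.coeff 1)⁻¹, ?_⟩
    rw [hderiv gs hgs_q, zero_mul, zero_add, ← C_mul, inv_mul_cancel₀ hgs1, C_1]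
  have hgs_ne : gs ≠ 0 := hgs_monic.ne_zero
  -- the number of roots of gs is q ^ s
  have hroots_card : gs.roots.toFinset.card = q ^ s := by
    rw [Multiset.toFinset_card_of_nodup (nodup_roots hsep)]
    have := Splits.natDegree_eq_card_roots hgs_split
    rw [Polynomial.map_id] at this
    rw [← this, hgs_deg]
  -- x ^ (q^n + q^(n-r)) = x ^ (q^(n-r) + 1) for all x in F
  have hx : ∀ x : F, x ^ (q ^ (n - r) + 1) - x ^ (q ^ n + q ^ (n - r)) = 0 := by
    intro x
    have hxq : x ^ q ^ n = x := by rw [← hF, FiniteField.pow_card]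
    rw [pow_add, pow_add, hxq, pow_one, mul_comm, sub_self]
  -- rewrite the set as a product
  have hset : {xy : F × F |
      Polynomial.eval xy.2 gs = xy.1 ^ (q ^ (n - r) + 1) - xy.1 ^ (q ^ n + q ^ (n - r))} =
      (Set.univ : Set F) ×ˢ {y : F | Polynomial.eval y gs = 0} := by
    ext ⟨x, y⟩
    simp only [Set.mem_setOf_eq, Set.mem_prod, Set.mem_univ, true_and]
    rw [hx x]
  rw [hset]
  have hyset : {y : F | Polynomial.eval y gs = 0} = ↑gs.roots.toFinset := by
    ext y
    simp [Polynomial.mem_roots, hgs_ne, Polynomial.IsRoot]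
  rw [hyset, Set.ncard_eq_toFinset_card', Set.toFinset_prod, Finset.card_product]
  simp only [Set.toFinset_univ, Finset.card_univ, Finset.toFinset_coe]
  rw [hF, hroots_card, ← pow_add]
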